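/- For all integers a, b, c ≥ 5 and every d with 2 ≤ d ≤ 2a−2, in the graph FCS_{a,b,c} the vertices q_{1,2} and t_{1,2} satisfy d(q_{1,2}, p_{1,1}) = d(t_{1,2}, p_{1,1}) and d(q_{1,2}, p_{1,d}) = d(t_{1,2}, p_{1,d}); consequently the set {p_{1,1}, p_{1,d}} is not a metric generator for FCS_{a,b,c}. -/

import Mathlib

/-- Vertex labels of the zigzag-edge coronoid fused with starphene `FCS_{a,b,c}`. -/
inductive FCSV : Type
  | p1 (d : ℕ) | p2 (d : ℕ) | p3 (d : ℕ)
  | q1 (d : ℕ) | q2 (d : ℕ) | q3 (d : ℕ)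
  | r1 (d : ℕ) | r2 (d : ℕ) | r3 (d : ℕ)
  | s1 (d : ℕ) | s2 (d : ℕ) | s3 (d : ℕ)
  | t1 (d : ℕ) | t2 (d : ℕ) | t3 (d : ℕ)
  | u1 (d : ℕ) | u2 (d : ℕ) | u3 (d : ℕ)

/-- Membership in the vertex set of `FCS_{a,b,c}`. -/
def FCSvalid (a b c : ℕ) : FCSV → Prop
  | .p1 d => 1 ≤ d ∧ d ≤ 2*a-1
  | .p2 d => 1 ≤ d ∧ d ≤ 2*a-1
  | .p3 d => 1 ≤ d ∧ d ≤ 2*a-5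
  | .q1 d => 1 ≤ d ∧ d ≤ 2*c-1
  | .q2 d => 1 ≤ d ∧ d ≤ 2*c-1
  | .q3 d => 1 ≤ d ∧ d ≤ 2*c-5
  | .r1 d => 1 ≤ d ∧ d ≤ 2*b-1
  | .r2 d => 1 ≤ d ∧ d ≤ 2*b-1
  | .r3 d => 1 ≤ d ∧ d ≤ 2*b-5
  | .s1 d => 1 ≤ d ∧ d ≤ 2*a-3
  | .s2 d => 1 ≤ d ∧ d ≤ 2*a-3
  | .s3 d => 1 ≤ d ∧ d ≤ 2*a-5
  | .t1 d => 1 ≤ d ∧ d ≤ 2*c-3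
  | .t2 d => 1 ≤ d ∧ d ≤ 2*c-3
  | .t3 d => 1 ≤ d ∧ d ≤ 2*c-5
  | .u1 d => 1 ≤ d ∧ d ≤ 2*b-3
  | .u2 d => 1 ≤ d ∧ d ≤ 2*b-3
  | .u3 d => 1 ≤ d ∧ d ≤ 2*b-5

/-- The vertex set of `FCS_{a,b,c}` as a type. -/
abbrev FCSVert (a b c : ℕ) := {v : FCSV // FCSvalid a b c v}

/-- The (oriented) edge list of `FCS_{a,b,c}`. -/
def FCSadj (a b c : ℕ) : FCSV → FCSV → Prop := fun x y =>
  -- path edges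
  (∃ d, 1 ≤ d ∧ d ≤ 2*a-2 ∧ ((x, y) = (.p1 d, .p1 (d+1)) ∨ (x, y) = (.p2 d, .p2 (d+1)))) ∨
  (∃ d, 1 ≤ d ∧ d ≤ 2*c-2 ∧ ((x, y) = (.q1 d, .q1 (d+1)) ∨ (x, y) = (.q2 d, .q2 (d+1)))) ∨
  (∃ d, 1 ≤ d ∧ d ≤ 2*b-2 ∧ ((x, y) = (.r1 d, .r1 (d+1)) ∨ (x, y) = (.r2 d, .r2 (d+1)))) ∨
  (∃ d, 1 ≤ d ∧ d ≤ 2*a-4 ∧ ((x, y) = (.s1 d, .s1 (d+1)) ∨ (x, y) = (.s2 d, .s2 (d+1)))) ∨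
  (∃ d, 1 ≤ d ∧ d ≤ 2*b-4 ∧ ((x, y) = (.u1 d, .u1 (d+1)) ∨ (x, y) = (.t2 d, .t2 (d+1)))) ∨
  (∃ d, 1 ≤ d ∧ d ≤ 2*c-4 ∧ ((x, y) = (.t1 d, .t1 (d+1)) ∨ (x, y) = (.u2 d, .u2 (d+1)))) ∨
  (∃ d, 1 ≤ d ∧ d ≤ 2*a-6 ∧ ((x, y) = (.p3 d, .p3 (d+1)) ∨ (x, y) = (.s3 d, .s3 (d+1)))) ∨
  (∃ d, 1 ≤ d ∧ d ≤ 2*c-6 ∧ ((x, y) = (.q3 d, .q3 (d+1)) ∨ (x, y) = (.t3 d, .t3 (d+1)))) ∨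
  (∃ d, 1 ≤ d ∧ d ≤ 2*b-6 ∧ ((x, y) = (.r3 d, .r3 (d+1)) ∨ (x, y) = (.u3 d, .u3 (d+1)))) ∨
  -- rung edges
  (∃ d, 1 ≤ d ∧ d ≤ a-1 ∧ ((x, y) = (.p1 (2*d), .s1 (2*d-1)) ∨ (x, y) = (.p2 (2*d), .s2 (2*d-1)))) ∨
  (∃ d, 1 ≤ d ∧ d ≤ c-1 ∧ ((x, y) = (.q1 (2*d), .t1 (2*d-1)) ∨ (x, y) = (.q2 (2*d), .u2 (2*d-1)))) ∨
  (∃ d, 1 ≤ d ∧ d ≤ b-1 ∧ ((x, y) = (.r1 (2*d), .u1 (2*d-1)) ∨ (x, y) = (.r2 (2*d), .t2 (2*d-1)))) ∨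
  (∃ d, 1 ≤ d ∧ d ≤ a-2 ∧ (x, y) = (.p3 (2*d-1), .s3 (2*d-1))) ∨
  (∃ d, 1 ≤ d ∧ d ≤ c-2 ∧ (x, y) = (.q3 (2*d-1), .t3 (2*d-1))) ∨
  (∃ d, 1 ≤ d ∧ d ≤ b-2 ∧ (x, y) = (.r3 (2*d-1), .u3 (2*d-1))) ∨
  -- junction edges
  (x, y) = (.p3 1, .r3 1) ∨ (x, y) = (.q3 1, .u3 1) ∨ (x, y) = (.s3 1, .t3 1) ∨
  (x, y) = (.p3 (2*a-5), .t2 (2*c-4)) ∨ (x, y) = (.s3 (2*a-5), .u2 2) ∨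
  (x, y) = (.q3 (2*c-5), .u1 (2*b-4)) ∨ (x, y) = (.t3 (2*c-5), .s2 (2*a-4)) ∨
  (x, y) = (.r3 (2*b-5), .s1 (2*a-4)) ∨ (x, y) = (.u3 (2*b-5), .t1 2) ∨
  (x, y) = (.p1 1, .q2 1) ∨ (x, y) = (.s1 1, .u2 1) ∨
  (x, y) = (.p1 (2*a-1), .q1 1) ∨ (x, y) = (.s1 (2*a-3), .t1 1) ∨
  (x, y) = (.q1 (2*c-1), .r1 1) ∨ (x, y) = (.t1 (2*c-3), .u1 1) ∨
  (x, y) = (.r1 (2*b-1), .p2 (2*a-1)) ∨ (x, y) = (.u1 (2*b-3), .s2 (2*a-3)) ∨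
  (x, y) = (.p2 1, .r2 (2*b-1)) ∨ (x, y) = (.s2 1, .t2 (2*b-3)) ∨
  (x, y) = (.r2 1, .q2 (2*c-1)) ∨ (x, y) = (.t2 1, .u2 (2*c-3))

/-- The zigzag-edge coronoid fused with starphene `FCS_{a,b,c}`. -/
def FCS (a b c : ℕ) : SimpleGraph (FCSVert a b c) :=
  SimpleGraph.fromRel (fun x y => FCSadj a b c x.1 y.1)

/-- `W` is a metric generator (resolving set) for `G`. -/
def IsResolving {α : Type*} (G : SimpleGraph α) (W : Set α) : Prop :=
  ∀ x y : α, x ≠ y → ∃ w ∈ W, G.dist w x ≠ G.dist w y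

/-- The metric dimension of `G`. -/
noncomputable def metricDim {α : Type*} (G : SimpleGraph α) : ℕ :=
  sInf {n | ∃ W : Set α, W.Finite ∧ W.ncard = n ∧ IsResolving G W}

/-- Distance from a vertex to an edge: minimum of the distances to its endpoints. -/
noncomputable def edgeDist {α : Type*} (G : SimpleGraph α) (x : α) (e : Sym2 α) : ℕ :=
  Sym2.lift ⟨fun y z => min (G.dist x y) (G.dist x z), fun _ _ => min_comm _ _⟩ e

/-- `W` is an edge metric generator for `G`. -/
def IsEdgeResolving {α : Type*} (G : SimpleGraph α) (W : Set α) : Prop :=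
  ∀ e ∈ G.edgeSet, ∀ f ∈ G.edgeSet, e ≠ f → ∃ w ∈ W, edgeDist G w e ≠ edgeDist G w f

/-- The edge metric dimension of `G`. -/
noncomputable def edgeMetricDim {α : Type*} (G : SimpleGraph α) : ℕ :=
  sInf {n | ∃ W : Set α, W.Finite ∧ W.ncard = n ∧ IsEdgeResolving G W}

-- AUX DEFINITIONS AND LEMMAS (to be inserted before the theorem)

/-- Auxiliary constant for the Lipschitz potential. -/
def FCSE (a b c : ℕ) : ℤ :=
  min (2*(b:ℤ)+2*c-4) (min (max (2*(b:ℤ)-2*c+8) (2*(c:ℤ)-2*b+6)) (2*(a:ℤ)+1))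

/-- Auxiliary constant for the Lipschitz potential. -/
def FCSR (a b c : ℕ) : ℤ :=
  min (2*(c:ℤ)-1+(2*(b:ℤ)-1))
    (min (max (9+(2*(b:ℤ)-1)-(2*(c:ℤ)-4)) (9+(2*(c:ℤ)-4)-(2*(b:ℤ)-1)))
      (min (max (9+(2*(b:ℤ)-1)-(2*(c:ℤ)-2)) (9+(2*(c:ℤ)-2)-(2*(b:ℤ)-1))) (2*(a:ℤ)+1)))

/-- A 1-Lipschitz integer potential on `FCS_{a,b,c}`, pinned to `j-1` on `p1 j`
and to `2a` on `q1 2` and `t1 2`. -/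
def FCSD (a b c : ℕ) : FCSV → ℤ
  | .p1 j => (j:ℤ) - 1
  | .s1 j => (j:ℤ) + 1
  | .q1 j => min (2*(a:ℤ)-2+j) (2*(a:ℤ))
  | .t1 j => min (2*(a:ℤ)-2+j) (2*(a:ℤ))
  | .q2 j => min (j:ℤ) (2*(a:ℤ))
  | .u2 j => min ((j:ℤ)+2) (2*(a:ℤ))
  | .s3 j => 2*(a:ℤ)-j
  | .p3 j => 2*(a:ℤ)+1-j
  | .q3 _ => 2*(a:ℤ)
  | .t3 _ => 2*(a:ℤ)
  | .r3 j => min (2*(a:ℤ)) (2*(a:ℤ)+2*b-7-j)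
  | .u3 j => min (2*(a:ℤ)) (2*(a:ℤ)+2*b-6-j)
  | .u1 _ => 2*(a:ℤ)
  | .r1 _ => 2*(a:ℤ)
  | .t2 j => min (2*(c:ℤ)-1+j) (min (max (7+(j:ℤ)-(2*(c:ℤ)-4)) (7+(2*(c:ℤ)-4)-j)) (2*(a:ℤ)+1))
  | .r2 j => min (2*(c:ℤ)-1+j)
      (min (max (9+(j:ℤ)-(2*(c:ℤ)-4)) (9+(2*(c:ℤ)-4)-j))
        (min (max (9+(j:ℤ)-(2*(c:ℤ)-2)) (9+(2*(c:ℤ)-2)-j)) (2*(a:ℤ)+1)))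
  | .s2 j => min (2*(a:ℤ)) (FCSE a b c + j)
  | .p2 j => min (2*(a:ℤ)) (min (FCSE a b c + j) (FCSR a b c + j))

set_option maxHeartbeats 4000000 in
lemma FCS_lip (a b c : ℕ) (ha : 5 ≤ a) (hb : 5 ≤ b) (hc : 5 ≤ c) {x y : FCSV}
    (h : FCSadj a b c x y) :
    (FCSD a b c x - FCSD a b c y).natAbs ≤ 1 := by
  unfold FCSadj at h
  rcases h with ⟨d,h1,h2,h|h⟩|⟨d,h1,h2,h|h⟩|⟨d,h1,h2,h|h⟩|⟨d,h1,h2,h|h⟩|⟨d,h1,h2,h|h⟩|⟨d,h1,h2,h|h⟩|⟨d,h1,h2,h|h⟩|⟨d,h1,h2,h|h⟩|⟨d,h1,h2,h|h⟩|⟨d,h1,h2,h|h⟩|⟨d,h1,h2,h|h⟩|⟨d,h1,h2,h|h⟩|⟨d,h1,h2,h⟩|⟨d,h1,h2,h⟩|⟨d,h1,h2,h⟩|h|h|h|h|h|h|h|h|h|h|h|h|h|h|h|h|h|h|h|h|h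
  all_goals rw [Prod.mk.injEq] at h
  all_goals obtain ⟨rfl, rfl⟩ := h
  all_goals simp only [FCSD, FCSE, FCSR]
  all_goals omega

lemma FCS_walk_bound (a b c : ℕ) (ha : 5 ≤ a) (hb : 5 ≤ b) (hc : 5 ≤ c)
    {x y : FCSVert a b c} (w : (FCS a b c).Walk x y) :
    (FCSD a b c x.1 - FCSD a b c y.1).natAbs ≤ w.length := by
  induction w with
  | nil => simp
  | @cons u v z h p ih =>
    rw [SimpleGraph.Walk.length_cons]
    have h' : (SimpleGraph.fromRel (fun x y : FCSVert a b c => FCSadj a b c x.1 y.1)).Adj u v := h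
    rw [SimpleGraph.fromRel_adj] at h'
    rcases h'.2 with h2|h2
    · have := FCS_lip a b c ha hb hc h2; omega
    · have := FCS_lip a b c ha hb hc h2; omega

lemma FCS_mkAdj (a b c : ℕ) {x y : FCSVert a b c} (hne : x.1 ≠ y.1)
    (h : FCSadj a b c x.1 y.1 ∨ FCSadj a b c y.1 x.1) : (FCS a b c).Adj x y := by
  have : (SimpleGraph.fromRel (fun u v : FCSVert a b c => FCSadj a b c u.1 v.1)).Adj x y :=
    (SimpleGraph.fromRel_adj _ _ _).mpr ⟨fun e => hne (congrArg Subtype.val e), h⟩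
  exact this

lemma FCS_adj_p1path (a b c d : ℕ) (h1 : 1 ≤ d) (h2 : d ≤ 2*a-2) :
    FCSadj a b c (.p1 d) (.p1 (d+1)) :=
  Or.inl (⟨d, h1, h2, Or.inl rfl⟩)

lemma FCS_adj_q1path (a b c d : ℕ) (h1 : 1 ≤ d) (h2 : d ≤ 2*c-2) :
    FCSadj a b c (.q1 d) (.q1 (d+1)) :=
  Or.inr (Or.inl (⟨d, h1, h2, Or.inl rfl⟩))

lemma FCS_adj_s1path (a b c d : ℕ) (h1 : 1 ≤ d) (h2 : d ≤ 2*a-4) :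
    FCSadj a b c (.s1 d) (.s1 (d+1)) :=
  Or.inr (Or.inr (Or.inr (Or.inl (⟨d, h1, h2, Or.inl rfl⟩))))

lemma FCS_adj_t1path (a b c d : ℕ) (h1 : 1 ≤ d) (h2 : d ≤ 2*c-4) :
    FCSadj a b c (.t1 d) (.t1 (d+1)) :=
  Or.inr (Or.inr (Or.inr (Or.inr (Or.inr (Or.inl (⟨d, h1, h2, Or.inl rfl⟩))))))

lemma FCS_adj_p1s1 (a b c d : ℕ) (h1 : 1 ≤ d) (h2 : d ≤ a-1) :
    FCSadj a b c (.p1 (2*d)) (.s1 (2*d-1)) :=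
  Or.inr (Or.inr (Or.inr (Or.inr (Or.inr (Or.inr (Or.inr (Or.inr (Or.inr (Or.inl (⟨d, h1, h2, Or.inl rfl⟩))))))))))

lemma FCS_adj_p1q1 (a b c : ℕ) : FCSadj a b c (.p1 (2*a-1)) (.q1 1) :=
  Or.inr (Or.inr (Or.inr (Or.inr (Or.inr (Or.inr (Or.inr (Or.inr (Or.inr (Or.inr (Or.inr (Or.inr (Or.inr (Or.inr (Or.inr (Or.inr (Or.inr (Or.inr (Or.inr (Or.inr (Or.inr (Or.inr (Or.inr (Or.inr (Or.inr (Or.inr (Or.inl (rfl)))))))))))))))))))))))))))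

lemma FCS_adj_s1t1 (a b c : ℕ) : FCSadj a b c (.s1 (2*a-3)) (.t1 1) :=
  Or.inr (Or.inr (Or.inr (Or.inr (Or.inr (Or.inr (Or.inr (Or.inr (Or.inr (Or.inr (Or.inr (Or.inr (Or.inr (Or.inr (Or.inr (Or.inr (Or.inr (Or.inr (Or.inr (Or.inr (Or.inr (Or.inr (Or.inr (Or.inr (Or.inr (Or.inr (Or.inr (Or.inl (rfl))))))))))))))))))))))))))))

set_option maxHeartbeats 4000000 in
lemma FCS_ubq (a b c : ℕ) (ha : 5 ≤ a) (hb : 5 ≤ b) (hc : 5 ≤ c) :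
    ∀ m, ∀ hm : m ≤ 2*a-2,
    ∃ w : (FCS a b c).Walk ⟨.q1 2, by unfold FCSvalid; omega⟩
      ⟨.p1 (2*a-1-m), by unfold FCSvalid; omega⟩, w.length ≤ 2+m := by
  intro m
  induction m with
  | zero =>
    intro _
    refine ⟨SimpleGraph.Walk.cons (v := ⟨.q1 1, by unfold FCSvalid; omega⟩)
      (FCS_mkAdj a b c (by intro hh; injection hh with hh; omega)
        (Or.inr (FCS_adj_q1path a b c 1 (by omega) (by omega))))
      (SimpleGraph.Walk.cons
      (FCS_mkAdj a b c (by intro hh; exact FCSV.noConfusion hh)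
        (Or.inr (FCS_adj_p1q1 a b c)))
      SimpleGraph.Walk.nil), by simp⟩
  | succ n ih =>
    intro hn
    obtain ⟨w, hw⟩ := ih (by omega)
    have hadj : (FCS a b c).Adj ⟨.p1 (2*a-1-n), by unfold FCSvalid; omega⟩
        ⟨.p1 (2*a-2-n), by unfold FCSvalid; omega⟩ := by
      refine FCS_mkAdj a b c (by intro hh; injection hh with hh; omega) (Or.inr ?_)
      show FCSadj a b c (FCSV.p1 (2*a-2-n)) (FCSV.p1 (2*a-1-n))
      rw [show 2*a-1-n = (2*a-2-n)+1 from by omega]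
      exact FCS_adj_p1path a b c (2*a-2-n) (by omega) (by omega)
    refine ⟨(w.concat hadj).copy rfl
      (Subtype.ext (congrArg FCSV.p1 (by omega : 2*a-2-n = 2*a-1-(n+1)))), ?_⟩
    rw [SimpleGraph.Walk.length_copy, SimpleGraph.Walk.length_concat]
    omega

set_option maxHeartbeats 4000000 in
lemma FCS_ubt (a b c : ℕ) (ha : 5 ≤ a) (hb : 5 ≤ b) (hc : 5 ≤ c) :
    ∀ m, ∀ hm : m ≤ 2*a-4,
    ∃ w : (FCS a b c).Walk ⟨.t1 2, by unfold FCSvalid; omega⟩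
      ⟨.s1 (2*a-3-m), by unfold FCSvalid; omega⟩, w.length ≤ 2+m := by
  intro m
  induction m with
  | zero =>
    intro _
    refine ⟨SimpleGraph.Walk.cons (v := ⟨.t1 1, by unfold FCSvalid; omega⟩)
      (FCS_mkAdj a b c (by intro hh; injection hh with hh; omega)
        (Or.inr (FCS_adj_t1path a b c 1 (by omega) (by omega))))
      (SimpleGraph.Walk.cons
      (FCS_mkAdj a b c (by intro hh; exact FCSV.noConfusion hh)
        (Or.inr (FCS_adj_s1t1 a b c)))
      SimpleGraph.Walk.nil), by simp⟩
  | succ n ih =>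
    intro hn
    obtain ⟨w, hw⟩ := ih (by omega)
    have hadj : (FCS a b c).Adj ⟨.s1 (2*a-3-n), by unfold FCSvalid; omega⟩
        ⟨.s1 (2*a-4-n), by unfold FCSvalid; omega⟩ := by
      refine FCS_mkAdj a b c (by intro hh; injection hh with hh; omega) (Or.inr ?_)
      show FCSadj a b c (FCSV.s1 (2*a-4-n)) (FCSV.s1 (2*a-3-n))
      rw [show 2*a-3-n = (2*a-4-n)+1 from by omega]
      exact FCS_adj_s1path a b c (2*a-4-n) (by omega) (by omega)
    refine ⟨(w.concat hadj).copy rfl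
      (Subtype.ext (congrArg FCSV.s1 (by omega : 2*a-4-n = 2*a-3-(n+1)))), ?_⟩
    rw [SimpleGraph.Walk.length_copy, SimpleGraph.Walk.length_concat]
    omega

set_option maxHeartbeats 4000000 in
lemma FCS_dist_q (a b c : ℕ) (ha : 5 ≤ a) (hb : 5 ≤ b) (hc : 5 ≤ c)
    (e : ℕ) (he1 : 1 ≤ e) (he2 : e ≤ 2*a-2) (hq : FCSvalid a b c (.q1 2))
    (hp : FCSvalid a b c (.p1 e)) :
    (FCS a b c).dist ⟨.q1 2, hq⟩ ⟨.p1 e, hp⟩ = 2*a+1-e := by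
  obtain ⟨w, hw⟩ := FCS_ubq a b c ha hb hc (2*a-1-e) (by omega)
  have hcopy : (⟨.p1 (2*a-1-(2*a-1-e)), by unfold FCSvalid; omega⟩ : FCSVert a b c)
      = ⟨.p1 e, hp⟩ := Subtype.ext (congrArg FCSV.p1 (by omega))
  have hub := SimpleGraph.dist_le (w.copy rfl hcopy)
  rw [SimpleGraph.Walk.length_copy] at hub
  have hr : (FCS a b c).Reachable ⟨.q1 2, hq⟩ ⟨.p1 e, hp⟩ := ⟨w.copy rfl hcopy⟩
  obtain ⟨p, hp'⟩ := hr.exists_walk_length_eq_dist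
  have hk := FCS_walk_bound a b c ha hb hc p
  rw [hp'] at hk
  simp only [FCSD] at hk
  omega

set_option maxHeartbeats 4000000 in
lemma FCS_dist_t (a b c : ℕ) (ha : 5 ≤ a) (hb : 5 ≤ b) (hc : 5 ≤ c)
    (e : ℕ) (he1 : 1 ≤ e) (he2 : e ≤ 2*a-2) (hq : FCSvalid a b c (.t1 2))
    (hp : FCSvalid a b c (.p1 e)) :
    (FCS a b c).dist ⟨.t1 2, hq⟩ ⟨.p1 e, hp⟩ = 2*a+1-e := by
  have hex : ∃ w2 : (FCS a b c).Walk ⟨.t1 2, hq⟩ ⟨.p1 e, hp⟩, w2.length ≤ 2*a+1-e := by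
    rcases Nat.even_or_odd e with he | he
    · obtain ⟨k, hk⟩ := he
      obtain ⟨w, hw⟩ := FCS_ubt a b c ha hb hc (2*a-2-e) (by omega)
      have hcopy : (⟨.s1 (2*a-3-(2*a-2-e)), by unfold FCSvalid; omega⟩ : FCSVert a b c)
          = ⟨.s1 (e-1), by unfold FCSvalid; omega⟩ :=
        Subtype.ext (congrArg FCSV.s1 (by omega))
      have hadj : (FCS a b c).Adj ⟨.s1 (e-1), by unfold FCSvalid; omega⟩ ⟨.p1 e, hp⟩ := by
        refine FCS_mkAdj a b c (by intro hh; exact FCSV.noConfusion hh) (Or.inr ?_)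
        show FCSadj a b c (FCSV.p1 e) (FCSV.s1 (e-1))
        rw [show e-1 = 2*k-1 from by omega, show e = 2*k from by omega]
        exact FCS_adj_p1s1 a b c k (by omega) (by omega)
      refine ⟨(w.copy rfl hcopy).concat hadj, ?_⟩
      rw [SimpleGraph.Walk.length_concat, SimpleGraph.Walk.length_copy]
      omega
    · obtain ⟨k, hk⟩ := he
      obtain ⟨w, hw⟩ := FCS_ubt a b c ha hb hc (2*a-3-e) (by omega)
      have hcopy : (⟨.s1 (2*a-3-(2*a-3-e)), by unfold FCSvalid; omega⟩ : FCSVert a b c)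
          = ⟨.s1 e, by unfold FCSvalid; omega⟩ :=
        Subtype.ext (congrArg FCSV.s1 (by omega))
      have hadj1 : (FCS a b c).Adj ⟨.s1 e, by unfold FCSvalid; omega⟩
          ⟨.p1 (e+1), by unfold FCSvalid; omega⟩ := by
        refine FCS_mkAdj a b c (by intro hh; exact FCSV.noConfusion hh) (Or.inr ?_)
        show FCSadj a b c (FCSV.p1 (e+1)) (FCSV.s1 e)
        rw [show e+1 = 2*(k+1) from by omega, show e = 2*(k+1)-1 from by omega]
        exact FCS_adj_p1s1 a b c (k+1) (by omega) (by omega)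
      have hadj2 : (FCS a b c).Adj ⟨.p1 (e+1), by unfold FCSvalid; omega⟩ ⟨.p1 e, hp⟩ := by
        refine FCS_mkAdj a b c (by intro hh; injection hh with hh; omega) (Or.inr ?_)
        exact FCS_adj_p1path a b c e (by omega) (by omega)
      refine ⟨((w.copy rfl hcopy).concat hadj1).concat hadj2, ?_⟩
      rw [SimpleGraph.Walk.length_concat, SimpleGraph.Walk.length_concat,
        SimpleGraph.Walk.length_copy]
      omega
  obtain ⟨w2, hw2⟩ := hex
  have hub := SimpleGraph.dist_le w2
  have hr : (FCS a b c).Reachable ⟨.t1 2, hq⟩ ⟨.p1 e, hp⟩ := ⟨w2⟩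
  obtain ⟨p, hp'⟩ := hr.exists_walk_length_eq_dist
  have hk := FCS_walk_bound a b c ha hb hc p
  rw [hp'] at hk
  simp only [FCSD] at hk
  omega


set_option maxHeartbeats 4000000 in
/-- for a, b, c ≥ 5 and `2 ≤ d ≤ 2a-2`, the vertices `q_{1,2}` and `t_{1,2}`
are at equal distance from both `p_{1,1}` and `p_{1,d}`; consequently `{p_{1,1}, p_{1,d}}`
is not a metric generator for `FCS_{a,b,c}`. -/
theorem statement_15 (a b c : ℕ) (ha : 5 ≤ a) (hb : 5 ≤ b) (hc : 5 ≤ c)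
    (d : ℕ) (hd1 : 2 ≤ d) (hd2 : d ≤ 2*a-2) :
    ((FCS a b c).dist ⟨FCSV.q1 2, by constructor <;> omega⟩
        ⟨FCSV.p1 1, by constructor <;> omega⟩ =
      (FCS a b c).dist ⟨FCSV.t1 2, by constructor <;> omega⟩
        ⟨FCSV.p1 1, by constructor <;> omega⟩) ∧
    ((FCS a b c).dist ⟨FCSV.q1 2, by constructor <;> omega⟩
        ⟨FCSV.p1 d, by constructor <;> omega⟩ =
      (FCS a b c).dist ⟨FCSV.t1 2, by constructor <;> omega⟩
        ⟨FCSV.p1 d, by constructor <;> omega⟩) ∧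
    ¬ IsResolving (FCS a b c)
      {⟨FCSV.p1 1, by constructor <;> omega⟩, ⟨FCSV.p1 d, by constructor <;> omega⟩} := by
  refine ⟨?_, ?_, ?_⟩
  · exact (FCS_dist_q a b c ha hb hc 1 (by omega) (by omega) _ _).trans
      (FCS_dist_t a b c ha hb hc 1 (by omega) (by omega) _ _).symm
  · exact (FCS_dist_q a b c ha hb hc d (by omega) hd2 _ _).trans
      (FCS_dist_t a b c ha hb hc d (by omega) hd2 _ _).symm
  · intro hres
    obtain ⟨w, hw, hne⟩ := hres ⟨.q1 2, by constructor <;> omega⟩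
      ⟨.t1 2, by constructor <;> omega⟩
      (by intro hh; exact FCSV.noConfusion (congrArg Subtype.val hh))
    simp only [Set.mem_insert_iff, Set.mem_singleton_iff] at hw
    rcases hw with rfl | rfl
    · apply hne
      exact (SimpleGraph.dist_comm.trans (FCS_dist_q a b c ha hb hc 1 (by omega) (by omega) _ _)).trans
        (SimpleGraph.dist_comm.trans (FCS_dist_t a b c ha hb hc 1 (by omega) (by omega) _ _)).symm
    · apply hne
      exact (SimpleGraph.dist_comm.trans (FCS_dist_q a b c ha hb hc d (by omega) hd2 _ _)).trans
        (SimpleGraph.dist_comm.trans (FCS_dist_t a b c ha hb hc d (by omega) hd2 _ _)).symm
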